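/- (Regularity analysis for the even orthogonal Borel–Bott–Weil weight.) Let n ≥ 1 and k ≥ 1 be integers with N = 2n ≥ 2k+2. Let β₁ ≥ β₂ ≥ ⋯ ≥ β_k ≥ 0 be integers with β₁ ≤ N−k, and define m ∈ ℤⁿ by mᵢ = 2(n−i)+1 − 2β_{k+1−i} for 1 ≤ i ≤ k and mᵢ = 2(n−i)+1 for k+1 ≤ i ≤ n (these are twice the half-integer coordinates of the weight δ + ρ). Then the absolute values |m₁|, …, |mₙ| are pairwise distinct if and only if there exists a symmetric Young diagram ν contained in the k×k square such that β is the horizontal (N−2k)-expansion of ν, i.e. βᵢ = νᵢ + (N−2k) for 1 ≤ i ≤ ℓ(ν) and βᵢ = νᵢ for ℓ(ν) < i ≤ k. -/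

import Mathlib

private lemma downset_card_iff (k : ℕ) (P : ℕ → Prop) [DecidablePred P]
    (hdown : ∀ j j' : ℕ, 1 ≤ j' → j' ≤ j → j ≤ k → P j → P j') :
    ∀ j : ℕ, 1 ≤ j → j ≤ k →
      (P j ↔ j ≤ ((Finset.Icc 1 k).filter (fun x => P x)).card) := by
  intro j hj1 hjk
  constructor
  · intro hP
    have hsub : Finset.Icc 1 j ⊆ (Finset.Icc 1 k).filter (fun x => P x) := by
      intro x hx
      simp only [Finset.mem_Icc] at hx
      simp only [Finset.mem_filter, Finset.mem_Icc]
      exact ⟨⟨hx.1, le_trans hx.2 hjk⟩, hdown j x hx.1 hx.2 hjk hP⟩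
    calc j = (Finset.Icc 1 j).card := by simp
    _ ≤ _ := Finset.card_le_card hsub
  · intro hle
    by_contra hP
    have hsub : (Finset.Icc 1 k).filter (fun x => P x) ⊆ Finset.Icc 1 (j - 1) := by
      intro x hx
      simp only [Finset.mem_filter, Finset.mem_Icc] at hx
      simp only [Finset.mem_Icc]
      refine ⟨hx.1.1, ?_⟩
      by_contra hxj
      push_neg at hxj
      exact hP (hdown x j hj1 (by omega) hx.1.2 hx.2)
    have := Finset.card_le_card hsub
    simp [Nat.card_Icc] at this
    omega

private lemma filtercard_le (k : ℕ) (P : ℕ → Prop) [DecidablePred P] :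
    ((Finset.Icc 1 k).filter (fun x => P x)).card ≤ k := by
  refine (Finset.card_filter_le _ _).trans ?_
  simp

private def tr (k : ℕ) (μ : ℕ → ℕ) (i : ℕ) : ℕ :=
  ((Finset.Icc 1 k).filter (fun j => i ≤ μ j)).card

private lemma tr_le (k : ℕ) (μ : ℕ → ℕ) (i : ℕ) : tr k μ i ≤ k :=
  filtercard_le k _

private lemma tr_galois (k : ℕ) (μ : ℕ → ℕ)
    (hmono : ∀ i j, 1 ≤ i → i ≤ j → μ j ≤ μ i)
    (hzero : ∀ j, k < j → μ j = 0)
    (i j : ℕ) (hi : 1 ≤ i) (hj : 1 ≤ j) :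
    j ≤ tr k μ i ↔ i ≤ μ j := by
  rcases le_or_gt j k with hjk | hjk
  · exact ((downset_card_iff k (fun x => i ≤ μ x)
      (fun a a' h1 h2 h3 hP => le_trans hP (hmono a' a h1 h2))) j hj hjk).symm
  · have h1 : tr k μ i ≤ k := tr_le k μ i
    have h2 := hzero j hjk
    constructor <;> intro h <;> omega

private lemma tr_anti (k : ℕ) (μ : ℕ → ℕ) {i i' : ℕ} (h : i ≤ i') :
    tr k μ i' ≤ tr k μ i :=
  Finset.card_le_card (Finset.monotone_filter_right _
    (fun j _ (hj : i' ≤ μ j) => le_trans h hj))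

private lemma tr_zero (k : ℕ) (μ : ℕ → ℕ) (hle : ∀ j, μ j ≤ k)
    (i : ℕ) (hi : k < i) : tr k μ i = 0 := by
  unfold tr
  rw [Finset.card_eq_zero, Finset.filter_eq_empty_iff]
  intro j _
  have := hle j
  omega

private lemma icc_filter_le_card (k c : ℕ) (hc : c ≤ k) :
    ((Finset.Icc 1 k).filter (fun i => i ≤ c)).card = c := by
  have : (Finset.Icc 1 k).filter (fun i => i ≤ c) = Finset.Icc 1 c := by
    ext x
    simp only [Finset.mem_filter, Finset.mem_Icc]
    omega
  rw [this, Nat.card_Icc]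
  omega

private lemma tr_tr (k : ℕ) (μ : ℕ → ℕ)
    (hmono : ∀ i j, 1 ≤ i → i ≤ j → μ j ≤ μ i)
    (hzero : ∀ j, k < j → μ j = 0)
    (hle : ∀ j, μ j ≤ k)
    (j : ℕ) (hj : 1 ≤ j) (hjk : j ≤ k) :
    tr k (tr k μ) j = μ j := by
  have : (Finset.Icc 1 k).filter (fun i => j ≤ tr k μ i)
      = (Finset.Icc 1 k).filter (fun i => i ≤ μ j) := by
    apply Finset.filter_congr
    intro i hi
    simp only [Finset.mem_Icc] at hi
    exact tr_galois k μ hmono hzero i j hi.1 hj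
  show ((Finset.Icc 1 k).filter (fun i => j ≤ tr k μ i)).card = μ j
  rw [this, icc_filter_le_card k (μ j) (hle j)]
private lemma ptwise_mono (a b : ℕ) (f g : ℕ → ℕ)
    (hf : ∀ i j, a ≤ i → i < j → j ≤ b → f i < f j)
    (hg : ∀ i j, a ≤ i → i < j → j ≤ b → g i < g j)
    (hex : ∀ x, (∃ i, a ≤ i ∧ i ≤ b ∧ f i = x) ↔ (∃ i, a ≤ i ∧ i ≤ b ∧ g i = x)) :
    ∀ i, a ≤ i → i ≤ b → f i = g i := by
  intro i
  induction i using Nat.strong_induction_on with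
  | _ i IH =>
    intro hai hib
    obtain ⟨j, haj, hjb, hgj⟩ := (hex (f i)).mp ⟨i, hai, hib, rfl⟩
    obtain ⟨j', haj', hjb', hfj'⟩ := (hex (g i)).mpr ⟨i, hai, hib, rfl⟩
    have h1 : g i ≤ f i := by
      rcases lt_or_ge j i with hji | hji
      · exfalso
        have := IH j hji haj hjb
        have := hf j i haj hji hib
        omega
      · rcases eq_or_lt_of_le hji with h | h
        · subst h
          omega
        · have := hg i j hai h hjb
          omega
    have h2 : f i ≤ g i := by
      rcases lt_or_ge j' i with hji | hji
      · exfalso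
        have := IH j' hji haj' hjb'
        have := hg j' i haj' hji hib
        omega
      · rcases eq_or_lt_of_le hji with h | h
        · subst h
          omega
        · have := hf i j' hai h hjb'
          omega
    omega

private lemma ptwise_anti (a b : ℕ) (f g : ℕ → ℕ)
    (hf : ∀ i j, a ≤ i → i < j → j ≤ b → f j < f i)
    (hg : ∀ i j, a ≤ i → i < j → j ≤ b → g j < g i)
    (hex : ∀ x, (∃ i, a ≤ i ∧ i ≤ b ∧ f i = x) ↔ (∃ i, a ≤ i ∧ i ≤ b ∧ g i = x)) :
    ∀ i, a ≤ i → i ≤ b → f i = g i := by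
  intro i
  induction i using Nat.strong_induction_on with
  | _ i IH =>
    intro hai hib
    obtain ⟨j, haj, hjb, hgj⟩ := (hex (f i)).mp ⟨i, hai, hib, rfl⟩
    obtain ⟨j', haj', hjb', hfj'⟩ := (hex (g i)).mpr ⟨i, hai, hib, rfl⟩
    have h1 : f i ≤ g i := by
      rcases lt_or_ge j i with hji | hji
      · exfalso
        have := IH j hji haj hjb
        have := hf j i haj hji hib
        omega
      · rcases eq_or_lt_of_le hji with h | h
        · subst h
          omega
        · have := hg i j hai h hjb
          omega
    have h2 : g i ≤ f i := by
      rcases lt_or_ge j' i with hji | hji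
      · exfalso
        have := IH j' hji haj' hjb'
        have := hg j' i haj' hji hib
        omega
      · rcases eq_or_lt_of_le hji with h | h
        · subst h
          omega
        · have := hf i j' hai h hjb'
          omega
    omega
private lemma core (k s : ℕ) (μ : ℕ → ℕ)
    (hmono : ∀ i j, 1 ≤ i → i ≤ j → μ j ≤ μ i)
    (hle : ∀ j, μ j ≤ k)
    (hzero : ∀ j, k < j → μ j = 0)
    (hs : ∀ j, 1 ≤ j → j ≤ k → (j ≤ s ↔ j ≤ μ j))
    (hsk : s ≤ k)
    (x : ℕ) (hx : x < k) :
    (∃ j, 1 ≤ j ∧ j ≤ s ∧ μ j = j + x) ↔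
    ¬ (∃ i, s + 1 ≤ i ∧ i ≤ k ∧ i = tr k μ i + 1 + x) := by
  set u := ((Finset.Icc 1 k).filter (fun j => j + x ≤ μ j)).card with hu_def
  have hu : ∀ j, 1 ≤ j → j ≤ k → (j ≤ u ↔ j + x ≤ μ j) := by
    intro j h1 h2
    exact (downset_card_iff k (fun j => j + x ≤ μ j)
      (fun a a' h1 h2 h3 hP => le_trans (by omega) (le_trans hP (hmono a' a h1 h2)))
      j h1 h2).symm
  have huk : u ≤ k := filtercard_le k _
  have hgal := tr_galois k μ hmono hzero
  -- LHS char
  have hL : (∃ j, 1 ≤ j ∧ j ≤ s ∧ μ j = j + x) ↔ (1 ≤ u ∧ μ u = u + x) := by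
    constructor
    · rintro ⟨j, h1, hjs, hje⟩
      have hjk : j ≤ k := le_trans hjs hsk
      have hju : j ≤ u := (hu j h1 hjk).mpr (by omega)
      have h1u : 1 ≤ u := le_trans h1 hju
      have : j = u := by
        by_contra hne
        have hlt : j < u := by omega
        have hj1k : j + 1 ≤ k := by omega
        have := (hu (j + 1) (by omega) hj1k).mp (by omega)
        have := hmono j (j + 1) h1 (by omega)
        omega
      subst this
      exact ⟨h1u, hje⟩
    · rintro ⟨h1u, hue⟩
      have huu : u ≤ μ u := by omega
      have hus : u ≤ s := (hs u h1u huk).mpr huu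
      exact ⟨u, h1u, hus, hue⟩
  -- RHS char
  have hR : (∃ i, s + 1 ≤ i ∧ i ≤ k ∧ i = tr k μ i + 1 + x) ↔
      (u + x + 1 ≤ k ∧ tr k μ (u + x + 1) = u) := by
    constructor
    · rintro ⟨i, his, hik, hie⟩
      set c := tr k μ i with hc_def
      have h1i : 1 ≤ i := by omega
      have hck : c ≤ k := tr_le k μ i
      have key : ∀ j, 1 ≤ j → j ≤ k → (j + x ≤ μ j ↔ j ≤ c) := by
        intro j h1 h2
        constructor
        · intro hmu
          have := (hgal (j + x) j (by omega) h1).mpr hmu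
          by_contra hjc
          push_neg at hjc
          have hxi : i ≤ j + x := by omega
          have := tr_anti k μ hxi
          omega
        · intro hjc
          have h1' : tr k μ (j + x) ≥ tr k μ (c + x) := tr_anti k μ (by omega)
          have h2' : tr k μ (c + x) ≥ tr k μ i := tr_anti k μ (by omega)
          have : j ≤ tr k μ (j + x) := by omega
          exact (hgal (j + x) j (by omega) h1).mp this
      have huc : u = c := by
        by_contra hne
        rcases Nat.lt_or_ge u c with h | h
        · have h1 : u + 1 ≤ k := by omega
          have := (key (u + 1) (by omega) h1).mpr (by omega)
          have := (hu (u + 1) (by omega) h1).mpr this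
          omega
        · have hcu : c < u := by omega
          have h1 : c + 1 ≤ k := by omega
          have := (hu (c + 1) (by omega) h1).mp (by omega)
          have := (key (c + 1) (by omega) h1).mp this
          omega
      constructor
      · omega
      · have : u + x + 1 = i := by omega
        rw [this]
        omega
    · rintro ⟨h1, h2⟩
      refine ⟨u + x + 1, ?_, h1, by omega⟩
      by_contra hlt
      push_neg at hlt
      have his : u + x + 1 ≤ s := by omega
      have := (hs (u + x + 1) (by omega) h1).mp his
      have := (hgal (u + x + 1) (u + x + 1) (by omega) (by omega)).mpr this
      omega
  rw [hL, hR]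
  -- final arithmetic bridge
  by_cases h1u : 1 ≤ u
  · have hmuu : u + x ≤ μ u := (hu u h1u huk).mp le_rfl
    by_cases hk1 : u + x + 1 ≤ k
    · have hc : tr k μ (u + x + 1) ≤ u := by
        by_contra hcc
        push_neg at hcc
        have := (hgal (u + x + 1) (u + 1) (by omega) (by omega)).mp hcc
        have h2 : u + 1 ≤ k := by omega
        have := (hu (u + 1) (by omega) h2).mpr (by omega)
        omega
      have hgg := hgal (u + x + 1) u (by omega) h1u
      have hmuk := hle u
      constructor
      · intro h
        intro hcon
        have : u ≤ tr k μ (u + x + 1) := by omega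
        have := hgg.mp this
        omega
      · intro h
        refine ⟨h1u, ?_⟩
        have : ¬ (u ≤ tr k μ (u + x + 1)) := by
          intro hcon
          have := hgg.mp hcon
          exact h ⟨hk1, by omega⟩
        have : ¬ (u + x + 1 ≤ μ u) := fun hcon => this (hgg.mpr hcon)
        omega
    · have hmuk := hle u
      constructor
      · intro _ hcon
        omega
      · intro _
        exact ⟨h1u, by omega⟩
  · have hu0 : u = 0 := by omega
    have htx : tr k μ (x + 1) = 0 := by
      by_contra hne
      have h1 : 1 ≤ tr k μ (x + 1) := by omega
      have := (hgal (x + 1) 1 (by omega) (by omega)).mp h1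
      have := (hu 1 (by omega) (by omega)).mpr (by omega)
      omega
    constructor
    · rintro ⟨h, _⟩
      omega
    · intro h
      exfalso
      refine h ⟨by omega, ?_⟩
      have e : u + x + 1 = x + 1 := by omega
      rw [e, htx]
      omega


/-- Regularity analysis for the even orthogonal Borel–Bott–Weil weight (type `D_n`).
Let `N = 2n ≥ 2k+2`, let `β₁ ≥ ⋯ ≥ β_k ≥ 0` with `β₁ ≤ N-k`, and let
`mᵢ = 2(n-i)+1 - 2β_{k+1-i}` for `1 ≤ i ≤ k`, `mᵢ = 2(n-i)+1` for `k+1 ≤ i ≤ n`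
(twice the half-integer coordinates of `δ + ρ`).
Then the `|mᵢ|` are pairwise distinct if and only if there is a symmetric Young
diagram `ν` in the `k × k` square (with diagonal length `s = ℓ(ν)`) such that `β`
is the horizontal `(N-2k)`-expansion of `ν`, i.e. `βᵢ = νᵢ + (N-2k)` for `i ≤ s`
and `βᵢ = νᵢ` for `s < i ≤ k`. (Everything is 1-indexed.) -/
theorem bbw_regularity_even_orthogonal
    (n k N : ℕ) (hn : 1 ≤ n) (hk : 1 ≤ k) (hN : N = 2 * n) (hNk : 2 * k + 2 ≤ N)
    (β : ℕ → ℕ)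
    (hβmono : ∀ i j : ℕ, 1 ≤ i → i ≤ j → j ≤ k → β j ≤ β i)
    (hβ1 : β 1 ≤ N - k)
    (m : ℕ → ℤ)
    (hm1 : ∀ i : ℕ, 1 ≤ i → i ≤ k →
      m i = 2 * ((n : ℤ) - i) + 1 - 2 * β (k + 1 - i))
    (hm2 : ∀ i : ℕ, k + 1 ≤ i → i ≤ n → m i = 2 * ((n : ℤ) - i) + 1) :
    (∀ i j : ℕ, 1 ≤ i → i < j → j ≤ n → |m i| ≠ |m j|) ↔
    (∃ ν : ℕ → ℕ,
      -- ν is a Young diagram contained in the k × k square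
      (∀ i j : ℕ, 1 ≤ i → i ≤ j → ν j ≤ ν i) ∧
      (∀ i : ℕ, ν i ≤ k) ∧
      (∀ i : ℕ, k < i → ν i = 0) ∧
      -- ν is symmetric: ν = νᵀ
      (∀ i : ℕ, 1 ≤ i → i ≤ k →
        ν i = ((Finset.Icc 1 k).filter (fun j => i ≤ ν j)).card) ∧
      -- β is the horizontal (N - 2k)-expansion of ν
      (∀ i : ℕ, 1 ≤ i → i ≤ k →
        β i = if i ≤ ((Finset.Icc 1 k).filter (fun j => j ≤ ν j)).card
          then ν i + (N - 2 * k) else ν i)) := by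
  obtain ⟨d, hd⟩ : ∃ d, n = k + d := ⟨n - k, by omega⟩
  have hd1 : 1 ≤ d := by omega
  have hβ1k : β 1 ≤ k + 2 * d := by omega
  constructor
  · intro H
    -- Step F1: each β j avoids the middle band
    have hgap : ∀ j, 1 ≤ j → j ≤ k → β j + 1 ≤ j ∨ j + 2 * d ≤ β j := by
      intro j h1 hjk
      by_contra hcon
      push_neg at hcon
      obtain ⟨hc1, hc2⟩ := hcon
      set i := k + 1 - j with hi_def
      have hmi := hm1 i (by omega) (by omega)
      have hji : k + 1 - i = j := by omega
      rw [hji] at hmi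
      rcases le_or_gt (β j) (d + j - 1) with hcase | hcase
      · set e := d + j - 1 - β j with he_def
        set i' := n - e with hi'_def
        have hmi' := hm2 i' (by omega) (by omega)
        refine H i i' (by omega) (by omega) (by omega) ?_
        rw [hmi, hmi', abs_eq_abs]
        omega
      · set e := β j - d - j with he_def
        set i' := n - e with hi'_def
        have hmi' := hm2 i' (by omega) (by omega)
        refine H i i' (by omega) (by omega) (by omega) ?_
        rw [hmi, hmi', abs_eq_abs]
        omega
    -- Step F2: the diagonal length s
    set s := ((Finset.Icc 1 k).filter (fun j => j + 2 * d ≤ β j)).card with hs_def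
    have hs : ∀ j, 1 ≤ j → j ≤ k → (j ≤ s ↔ j + 2 * d ≤ β j) := by
      intro j h1 h2
      exact (downset_card_iff k (fun j => j + 2 * d ≤ β j)
        (fun a a' ha1 ha2 ha3 hP =>
          le_trans (by omega) (le_trans hP (hβmono a' a ha1 ha2 ha3)))
        j h1 h2).symm
    have hsk : s ≤ k := filtercard_le k _
    have hβs : ∀ j, 1 ≤ j → j ≤ s → j + 2 * d ≤ β j :=
      fun j h1 h2 => (hs j h1 (le_trans h2 hsk)).mp h2
    have hβns : ∀ j, s < j → j ≤ k → β j + 1 ≤ j := by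
      intro j hj1 hj2
      have h1 : 1 ≤ j := by omega
      have := hs j h1 hj2
      rcases hgap j h1 hj2 with h | h
      · exact h
      · omega
    -- Step F3: the candidate diagram ν
    set ν : ℕ → ℕ :=
      fun j => if 1 ≤ j ∧ j ≤ k then (if j ≤ s then β j - 2 * d else β j) else 0
      with hν_def
    have hνval1 : ∀ j, 1 ≤ j → j ≤ s → ν j = β j - 2 * d := by
      intro j h1 h2
      simp only [hν_def]
      rw [if_pos ⟨h1, le_trans h2 hsk⟩, if_pos h2]
    have hνval2 : ∀ j, s < j → j ≤ k → ν j = β j := by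
      intro j h1 h2
      simp only [hν_def]
      rw [if_pos ⟨by omega, h2⟩, if_neg (by omega)]
    have hνval3 : ∀ j, k < j → ν j = 0 := by
      intro j h
      simp only [hν_def]
      rw [if_neg (by omega)]
    have hν_le : ∀ i, ν i ≤ k := by
      intro i
      rcases Nat.lt_or_ge k i with h | h
      · rw [hνval3 i h]; omega
      · rcases Nat.lt_or_ge 0 i with h0 | h0
        · rcases le_or_gt i s with his | his
          · rw [hνval1 i h0 his]
            have := hβmono 1 i (by omega) h0 h
            omega
          · rw [hνval2 i his h]
            have := hβns i his h
            omega
        · have : i = 0 := by omega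
          rw [this]
          simp only [hν_def]
          norm_num
    have hνdiag : ∀ j, 1 ≤ j → j ≤ s → j ≤ ν j := by
      intro j h1 h2
      rw [hνval1 j h1 h2]
      have := hβs j h1 h2
      omega
    have hνoff : ∀ j, s < j → ν j + 1 ≤ j := by
      intro j h1
      rcases le_or_gt j k with h2 | h2
      · rw [hνval2 j h1 h2]
        exact hβns j h1 h2
      · rw [hνval3 j h2]
        omega
    have hνmono : ∀ i j, 1 ≤ i → i ≤ j → ν j ≤ ν i := by
      intro i j h1 hij
      rcases le_or_gt j k with hjk | hjk
      · have hik : i ≤ k := le_trans hij hjk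
        rcases le_or_gt j s with hjs | hjs
        · have his : i ≤ s := le_trans hij hjs
          rw [hνval1 i h1 his, hνval1 j (by omega) hjs]
          have := hβmono i j h1 hij hjk
          omega
        · rcases le_or_gt i s with his | his
          · rw [hνval1 i h1 his, hνval2 j hjs hjk]
            have hbis : β s ≤ β i := hβmono i s h1 his hsk
            have hss := hβs s (le_trans h1 his) le_rfl
            have hs1 := hβns (s + 1) (by omega) (by omega)
            have hbj : β j ≤ β (s + 1) := hβmono (s + 1) j (by omega) (by omega) hjk
            omega
          · rw [hνval2 i his hik, hνval2 j hjs hjk]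
            exact hβmono i j h1 hij hjk
      · rw [hνval3 j hjk]
        omega
    -- characterization of s via ν
    have hνs : ∀ j, 1 ≤ j → j ≤ k → (j ≤ s ↔ j ≤ ν j) := by
      intro j h1 h2
      constructor
      · intro h
        exact hνdiag j h1 h
      · intro h
        by_contra hc
        push_neg at hc
        have := hνoff j (by omega)
        omega
    have hscard : ((Finset.Icc 1 k).filter (fun j => j ≤ ν j)).card = s := by
      have he : (Finset.Icc 1 k).filter (fun j => j ≤ ν j) = Finset.Icc 1 s := by
        ext y
        simp only [Finset.mem_filter, Finset.mem_Icc]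
        constructor
        · rintro ⟨⟨hy1, hy2⟩, hy3⟩
          exact ⟨hy1, (hνs y hy1 hy2).mpr hy3⟩
        · rintro ⟨hy1, hy2⟩
          exact ⟨⟨hy1, by omega⟩, (hνs y hy1 (by omega)).mp hy2⟩
      rw [he, Nat.card_Icc]
      omega
    -- cross distinctness from the hypothesis H
    have hcross : ∀ p q, 1 ≤ p → p ≤ s → s < q → q ≤ k → ν p + ν q + 1 ≠ p + q := by
      intro p q hp1 hps hsq hqk hsum
      set i := k + 1 - q with hi_def
      set i' := k + 1 - p with hi'_def
      have hmi := hm1 i (by omega) (by omega)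
      have hmi' := hm1 i' (by omega) (by omega)
      have e1 : k + 1 - i = q := by omega
      have e2 : k + 1 - i' = p := by omega
      rw [e1] at hmi
      rw [e2] at hmi'
      have hb1 := hβs p hp1 hps
      have hβp : β p = ν p + 2 * d := by
        have := hνval1 p hp1 hps
        omega
      have hβq : β q = ν q := (hνval2 q hsq hqk).symm
      have hνpp : p ≤ ν p := hνdiag p hp1 hps
      have hνqq : ν q + 1 ≤ q := hνoff q hsq
      refine H i i' (by omega) (by omega) (by omega) ?_
      rw [hmi, hmi', abs_eq_abs]
      omega
    -- the finsets A and B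
    set A := (Finset.Icc 1 s).image (fun j => ν j - j) with hA_def
    set B := (Finset.Icc (s + 1) k).image (fun j => j - 1 - ν j) with hB_def
    have hinjA : Set.InjOn (fun j => ν j - j) (Finset.Icc 1 s) := by
      intro a ha b hb hab
      simp only [Finset.coe_Icc, Set.mem_Icc] at ha hb
      simp only at hab
      have h1 := hνdiag a ha.1 ha.2
      have h2 := hνdiag b hb.1 hb.2
      rcases Nat.lt_trichotomy a b with h | h | h
      · have := hνmono a b ha.1 (le_of_lt h)
        omega
      · exact h
      · have := hνmono b a hb.1 (le_of_lt h)
        omega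
    have hinjB : Set.InjOn (fun j => j - 1 - ν j) (Finset.Icc (s + 1) k) := by
      intro a ha b hb hab
      simp only [Finset.coe_Icc, Set.mem_Icc] at ha hb
      simp only at hab
      have h1 := hνoff a (by omega)
      have h2 := hνoff b (by omega)
      rcases Nat.lt_trichotomy a b with h | h | h
      · have := hνmono a b (by omega) (le_of_lt h)
        omega
      · exact h
      · have := hνmono b a (by omega) (le_of_lt h)
        omega
    have hcardA : A.card = s := by
      rw [hA_def, Finset.card_image_of_injOn hinjA, Nat.card_Icc]
      omega
    have hcardB : B.card = k - s := by
      rw [hB_def, Finset.card_image_of_injOn hinjB, Nat.card_Icc]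
      omega
    have hmemA : ∀ x, x ∈ A ↔ ∃ j, 1 ≤ j ∧ j ≤ s ∧ ν j = j + x := by
      intro x
      rw [hA_def]
      simp only [Finset.mem_image, Finset.mem_Icc]
      constructor
      · rintro ⟨j, ⟨hj1, hj2⟩, hje⟩
        have := hνdiag j hj1 hj2
        exact ⟨j, hj1, hj2, by omega⟩
      · rintro ⟨j, hj1, hj2, hje⟩
        exact ⟨j, ⟨hj1, hj2⟩, by omega⟩
    have hmemB : ∀ x, x ∈ B ↔ ∃ i, s + 1 ≤ i ∧ i ≤ k ∧ i = ν i + 1 + x := by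
      intro x
      rw [hB_def]
      simp only [Finset.mem_image, Finset.mem_Icc]
      constructor
      · rintro ⟨j, ⟨hj1, hj2⟩, hje⟩
        have := hνoff j (by omega)
        exact ⟨j, hj1, hj2, by omega⟩
      · rintro ⟨j, hj1, hj2, hje⟩
        have := hνoff j (by omega)
        exact ⟨j, ⟨hj1, hj2⟩, by omega⟩
    have hdisj : Disjoint A B := by
      rw [Finset.disjoint_left]
      intro x hxa hxb
      obtain ⟨p, hp1, hp2, hpe⟩ := (hmemA x).mp hxa
      obtain ⟨q, hq1, hq2, hqe⟩ := (hmemB x).mp hxb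
      exact hcross p q hp1 hp2 (by omega) hq2 (by omega)
    have hABsub : A ∪ B ⊆ Finset.range k := by
      intro x hx
      rw [Finset.mem_union] at hx
      rw [Finset.mem_range]
      rcases hx with hx | hx
      · obtain ⟨j, hj1, hj2, hje⟩ := (hmemA x).mp hx
        have := hν_le j
        omega
      · obtain ⟨j, hj1, hj2, hje⟩ := (hmemB x).mp hx
        omega
    have hunion : A ∪ B = Finset.range k := by
      apply Finset.eq_of_subset_of_card_le hABsub
      rw [Finset.card_union_of_disjoint hdisj, Finset.card_range, hcardA, hcardB]
      omega
    have hAB : ∀ x, x < k → x ∈ A ∨ x ∈ B := by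
      intro x hx
      have hxr : x ∈ A ∪ B := by
        rw [hunion, Finset.mem_range]
        exact hx
      rwa [Finset.mem_union] at hxr
    -- T i < i beyond the diagonal, T i ≥ i on it
    have hgalν := tr_galois k ν hνmono hνval3
    have hTlt : ∀ i, s + 1 ≤ i → i ≤ k → tr k ν i < i := by
      intro i h1 h2
      by_contra hc
      push_neg at hc
      have := (hgalν i i (by omega) (by omega)).mp hc
      have := (hνs i (by omega) h2).mpr this
      omega
    have hTge : ∀ i, 1 ≤ i → i ≤ s → i ≤ tr k ν i := by
      intro i h1 h2
      exact (hgalν i i h1 h1).mpr (hνdiag i h1 h2)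
    -- first application of the core lemma: T = ν beyond the diagonal
    have hexB : ∀ x, (∃ i, s + 1 ≤ i ∧ i ≤ k ∧ i = tr k ν i + 1 + x) ↔
        (∃ i, s + 1 ≤ i ∧ i ≤ k ∧ i = ν i + 1 + x) := by
      intro x
      rcases Nat.lt_or_ge x k with hx | hx
      · have hCL := core k s ν hνmono hν_le hνval3 hνs hsk x hx
        rw [← hmemB]
        constructor
        · intro hT
          rcases hAB x hx with hA | hB
          · exact absurd hT (hCL.mp ((hmemA x).mp hA))
          · exact hB
        · intro hB
          have hnA : ¬ x ∈ A := fun hA => (Finset.disjoint_left.mp hdisj) hA hB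
          rw [hmemA] at hnA
          by_contra hT
          exact hnA (hCL.mpr hT)
      · constructor
        · rintro ⟨i, h1, h2, h3⟩
          exfalso
          omega
        · rintro ⟨i, h1, h2, h3⟩
          exfalso
          have := hνoff i (by omega)
          omega
    have hTeq2 : ∀ i, s + 1 ≤ i → i ≤ k → tr k ν i = ν i := by
      have hpt := ptwise_mono (s + 1) k (fun i => i - 1 - tr k ν i) (fun i => i - 1 - ν i)
        (by
          intro i j h1 h2 h3
          have ha := tr_anti k ν (le_of_lt h2)
          have hb := hTlt i h1 (by omega)
          have hc := hTlt j (by omega) h3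
          omega)
        (by
          intro i j h1 h2 h3
          have ha := hνmono i j (by omega) (le_of_lt h2)
          have hb := hνoff i (by omega)
          have hc := hνoff j (by omega)
          omega)
        (by
          intro x
          have h1 := hexB x
          constructor
          · rintro ⟨i, ha, hb, hc⟩
            have hc0 : i - 1 - tr k ν i = x := hc
            have hlt := hTlt i ha hb
            obtain ⟨i', ha', hb', hc'⟩ := h1.mp ⟨i, ha, hb, by omega⟩
            have := hνoff i' (by omega)
            exact ⟨i', ha', hb', show i' - 1 - ν i' = x by omega⟩
          · rintro ⟨i, ha, hb, hc⟩
            have hc0 : i - 1 - ν i = x := hc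
            have hlt := hνoff i (by omega)
            obtain ⟨i', ha', hb', hc'⟩ := h1.mpr ⟨i, ha, hb, by omega⟩
            have := hTlt i' ha' hb'
            exact ⟨i', ha', hb', show i' - 1 - tr k ν i' = x by omega⟩)
      intro i h1 h2
      have h0 : i - 1 - tr k ν i = i - 1 - ν i := hpt i h1 h2
      have ha := hTlt i h1 h2
      have hb := hνoff i (by omega)
      omega
    -- second application of the core lemma: T = ν on the diagonal
    have hTmono : ∀ i j, 1 ≤ i → i ≤ j → tr k ν j ≤ tr k ν i :=
      fun i j _ h => tr_anti k ν h
    have hTle : ∀ j, tr k ν j ≤ k := tr_le k ν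
    have hTzero : ∀ j, k < j → tr k ν j = 0 := tr_zero k ν hν_le
    have hTs : ∀ j, 1 ≤ j → j ≤ k → (j ≤ s ↔ j ≤ tr k ν j) := by
      intro j h1 h2
      rw [hνs j h1 h2]
      exact (hgalν j j h1 h1).symm
    have hexA : ∀ x, (∃ j, 1 ≤ j ∧ j ≤ s ∧ tr k ν j = j + x) ↔
        (∃ j, 1 ≤ j ∧ j ≤ s ∧ ν j = j + x) := by
      intro x
      rcases Nat.lt_or_ge x k with hx | hx
      · have hCLT := core k s (tr k ν) hTmono hTle hTzero hTs hsk x hx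
        have hCLν := core k s ν hνmono hν_le hνval3 hνs hsk x hx
        have htrtr : ∀ i, s + 1 ≤ i → i ≤ k →
            tr k (tr k ν) i = ν i := by
          intro i h1 h2
          exact tr_tr k ν hνmono hνval3 hν_le i (by omega) h2
        have hiff : (∃ i, s + 1 ≤ i ∧ i ≤ k ∧ i = tr k (tr k ν) i + 1 + x) ↔
            (∃ i, s + 1 ≤ i ∧ i ≤ k ∧ i = ν i + 1 + x) := by
          constructor
          · rintro ⟨i, h1, h2, h3⟩
            rw [htrtr i h1 h2] at h3
            exact ⟨i, h1, h2, h3⟩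
          · rintro ⟨i, h1, h2, h3⟩
            rw [← htrtr i h1 h2] at h3
            exact ⟨i, h1, h2, h3⟩
        rw [hCLT, hCLν, hiff]
        exact not_congr (hexB x).symm
      · constructor
        · rintro ⟨j, h1, h2, h3⟩
          have := hTle j
          omega
        · rintro ⟨j, h1, h2, h3⟩
          have := hν_le j
          omega
    have hTeq1 : ∀ j, 1 ≤ j → j ≤ s → tr k ν j = ν j := by
      have hpt := ptwise_anti 1 s (fun j => tr k ν j - j) (fun j => ν j - j)
        (by
          intro i j h1 h2 h3
          have ha := tr_anti k ν (le_of_lt h2)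
          have hb := hTge i h1 (by omega)
          have hc := hTge j (by omega) h3
          show tr k ν j - j < tr k ν i - i
          omega)
        (by
          intro i j h1 h2 h3
          have ha := hνmono i j h1 (le_of_lt h2)
          have hb := hνdiag i h1 (by omega)
          have hc := hνdiag j (by omega) h3
          show ν j - j < ν i - i
          omega)
        (by
          intro x
          have h1 := hexA x
          constructor
          · rintro ⟨j, ha, hb, hc⟩
            have hc0 : tr k ν j - j = x := hc
            have hge := hTge j ha hb
            obtain ⟨j', ha', hb', hc'⟩ := h1.mp ⟨j, ha, hb, by omega⟩
            have := hνdiag j' ha' hb'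
            exact ⟨j', ha', hb', show ν j' - j' = x by omega⟩
          · rintro ⟨j, ha, hb, hc⟩
            have hc0 : ν j - j = x := hc
            have hge := hνdiag j ha hb
            obtain ⟨j', ha', hb', hc'⟩ := h1.mpr ⟨j, ha, hb, by omega⟩
            have := hTge j' ha' hb'
            exact ⟨j', ha', hb', show tr k ν j' - j' = x by omega⟩)
      intro j h1 h2
      have h0 : tr k ν j - j = ν j - j := hpt j h1 h2
      have ha := hTge j h1 h2
      have hb := hνdiag j h1 h2
      omega
    -- assemble the witness
    refine ⟨ν, hνmono, hν_le, hνval3, ?_, ?_⟩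
    · intro i h1 h2
      have htr : tr k ν i = ((Finset.Icc 1 k).filter (fun j => i ≤ ν j)).card := rfl
      rw [← htr]
      rcases le_or_gt i s with his | his
      · exact (hTeq1 i h1 his).symm
      · exact (hTeq2 i (by omega) h2).symm
    · intro i h1 h2
      rw [hscard]
      split_ifs with h
      · have := hνval1 i h1 h
        have := hβs i h1 h
        omega
      · have := hνval2 i (by omega) h2
        omega
  · rintro ⟨ν, hνmono, hν_le, hνzero, hνsym, hβval⟩
    intro i j h1 hij hjn heq
    set s := ((Finset.Icc 1 k).filter (fun j => j ≤ ν j)).card with hs_def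
    have hs : ∀ p, 1 ≤ p → p ≤ k → (p ≤ s ↔ p ≤ ν p) := by
      intro p h1 h2
      exact (downset_card_iff k (fun x => x ≤ ν x)
        (fun a a' ha1 ha2 ha3 hP =>
          le_trans ha2 (le_trans hP (hνmono a' a ha1 ha2)))
        p h1 h2).symm
    have hsk : s ≤ k := filtercard_le k _
    have hβv : ∀ p, 1 ≤ p → p ≤ k →
        (p ≤ s → β p = ν p + 2 * d) ∧ (s < p → β p = ν p) := by
      intro p hp1 hp2
      have h := hβval p hp1 hp2
      constructor
      · intro hps
        rw [if_pos hps] at h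
        omega
      · intro hps
        rw [if_neg (by omega)] at h
        omega
    have hνdiag : ∀ p, 1 ≤ p → p ≤ s → p ≤ ν p := by
      intro p hp1 hp2
      exact (hs p hp1 (by omega)).mp hp2
    have hνoff : ∀ p, s < p → p ≤ k → ν p + 1 ≤ p := by
      intro p hp1 hp2
      have := hs p (by omega) hp2
      omega
    -- symmetric Galois correspondence
    have htr : ∀ p, 1 ≤ p → p ≤ k →
        ν p = tr k ν p := by
      intro p hp1 hp2
      exact hνsym p hp1 hp2
    have hgal := tr_galois k ν hνmono hνzero
    have hsymgal : ∀ p q, 1 ≤ p → p ≤ k → 1 ≤ q → q ≤ k → (q ≤ ν p ↔ p ≤ ν q) := by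
      intro p q hp1 hp2 hq1 hq2
      rw [htr p hp1 hp2]
      exact hgal p q hp1 hq1
    -- now the case analysis
    rcases le_or_gt i k with hik | hik
    · set q := k + 1 - i with hq_def
      have hmi := hm1 i h1 hik
      have heqq : k + 1 - i = q := rfl
      rw [heqq] at hmi
      have hq1 : 1 ≤ q := by omega
      have hq2 : q ≤ k := by omega
      rcases le_or_gt j k with hjk | hjk
      · -- both i < j ≤ k
        set p := k + 1 - j with hp_def
        have hmj := hm1 j (by omega) hjk
        have heqp : k + 1 - j = p := rfl
        rw [heqp] at hmj
        have hp1 : 1 ≤ p := by omega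
        have hpq : p < q := by omega
        have hmono := hνmono p q hp1 (by omega)
        rw [hmi, hmj, abs_eq_abs] at heq
        rcases le_or_gt q s with hqs | hqs
        · -- both on the diagonal
          have hβq := (hβv q hq1 hq2).1 hqs
          have hβp := (hβv p hp1 (by omega)).1 (by omega)
          have h1' := hνdiag p hp1 (by omega)
          have h2' := hνdiag q hq1 hqs
          omega
        · rcases le_or_gt p s with hps | hps
          · -- p on the diagonal, q off
            have hβp := (hβv p hp1 (by omega)).1 hps
            have hβq := (hβv q hq1 hq2).2 hqs
            have h1' := hνdiag p hp1 hps
            have h2' := hνoff q hqs hq2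
            -- from heq : equality of |m|, derive ν p + ν q + 1 = p + q
            have hsum : ν p + ν q + 1 = p + q := by omega
            rcases le_or_gt q (ν p) with hc | hc
            · have := (hsymgal p q hp1 (by omega) hq1 hq2).mp hc
              omega
            · have hc2 : ν q < p := by
                by_contra hcc
                push_neg at hcc
                have := (hsymgal q p hq1 hq2 hp1 (by omega)).mp hcc
                omega
              omega
          · -- both off the diagonal
            have hβp := (hβv p hp1 (by omega)).2 hps
            have hβq := (hβv q hq1 hq2).2 hqs
            have h1' := hνoff p hps (by omega)
            have h2' := hνoff q hqs hq2
            omega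
      · -- i ≤ k < j
        have hmj := hm2 j (by omega) hjn
        rw [hmi, hmj, abs_eq_abs] at heq
        rcases le_or_gt q s with hqs | hqs
        · have hβq := (hβv q hq1 hq2).1 hqs
          have h2' := hνdiag q hq1 hqs
          omega
        · have hβq := (hβv q hq1 hq2).2 hqs
          have h2' := hνoff q hqs hq2
          omega
    · -- k < i < j
      have hmi := hm2 i (by omega) (by omega)
      have hmj := hm2 j (by omega) hjn
      rw [hmi, hmj, abs_eq_abs] at heq
      omega
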